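/- If both the primal linear program min ⟨c,x⟩ subject to Ax = b, x ≥ 0 and its dual max ⟨b,w⟩ subject to Aᵀw + y = c, y ≥ 0 are feasible, then both problems have optimal solutions and their optimal objective values are equal. -/

import Mathlib

open Matrix

/-- Primal feasibility: `Ax = b`, `x ≥ 0`. -/
def PrimalFeasible {m n : ℕ} (A : Matrix (Fin m) (Fin n) ℝ) (b : Fin m → ℝ)
    (x : Fin n → ℝ) : Prop :=
  A *ᵥ x = b ∧ 0 ≤ x

/-- Dual feasibility: `Aᵀ w + y = c`, `y ≥ 0`. -/
def DualFeasible {m n : ℕ} (A : Matrix (Fin m) (Fin n) ℝ) (c : Fin n → ℝ)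
    (w : Fin m → ℝ) (y : Fin n → ℝ) : Prop :=
  Aᵀ *ᵥ w + y = c ∧ 0 ≤ y


open Matrix Finset

/-- Farkas' lemma for finitely generated cones, proved by induction on the generating set. -/
lemma lp_farkas {ι κ : Type*} [DecidableEq ι] [Fintype κ] (s : Finset ι) :
    ∀ (v : ι → κ → ℝ) (b : κ → ℝ),
    (∃ x : ι → ℝ, 0 ≤ x ∧ ∑ i ∈ s, x i • v i = b) ∨
    (∃ w : κ → ℝ, (∀ i ∈ s, v i ⬝ᵥ w ≤ 0) ∧ 0 < b ⬝ᵥ w) := by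
  classical
  induction s using Finset.induction_on with
  | empty =>
    intro v b
    by_cases hb : b = 0
    · exact Or.inl ⟨0, le_refl _, by simp [hb]⟩
    · refine Or.inr ⟨b, by simp, ?_⟩
      have h0 : 0 ≤ b ⬝ᵥ b := Finset.sum_nonneg fun i _ => mul_self_nonneg (b i)
      rcases lt_or_eq_of_le h0 with h | h
      · exact h
      · exact absurd (dotProduct_self_eq_zero.mp h.symm) hb
  | @insert a s ha ih =>
    intro v b
    rcases ih v b with ⟨x, hx, hsum⟩ | ⟨w, hw, hbw⟩
    · left
      refine ⟨Function.update x a 0, ?_, ?_⟩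
      · intro i; by_cases h : i = a
        · subst h; simp
        · simpa [Function.update_of_ne h] using hx i
      · rw [Finset.sum_insert ha]
        have : ∑ i ∈ s, Function.update x a 0 i • v i = ∑ i ∈ s, x i • v i := by
          refine Finset.sum_congr rfl fun i hi => ?_
          rw [Function.update_of_ne (by rintro rfl; exact ha hi)]
        simp [this, hsum]
    · by_cases hav : v a ⬝ᵥ w ≤ 0
      · right
        refine ⟨w, fun i hi => ?_, hbw⟩
        rcases Finset.mem_insert.mp hi with rfl | hi
        · exact hav
        · exact hw i hi
      · push_neg at hav
        set α := v a ⬝ᵥ w with hα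
        rcases ih (fun i => v i - ((v i ⬝ᵥ w) / α) • v a) (b - ((b ⬝ᵥ w) / α) • v a) with
          ⟨x, hx, hsum⟩ | ⟨u, hu, hbu⟩
        · left
          set μ := (b ⬝ᵥ w - ∑ i ∈ s, x i * (v i ⬝ᵥ w)) / α with hμdef
          have hμ : 0 ≤ μ := by
            apply div_nonneg _ hav.le
            have hterm : ∑ i ∈ s, x i * (v i ⬝ᵥ w) ≤ 0 :=
              Finset.sum_nonpos fun i hi => mul_nonpos_of_nonneg_of_nonpos (hx i) (hw i hi)
            linarith [hbw]
          refine ⟨Function.update x a μ, ?_, ?_⟩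
          · intro i; by_cases h : i = a
            · subst h; simpa using hμ
            · simpa [Function.update_of_ne h] using hx i
          · rw [Finset.sum_insert ha]
            have hre : ∑ i ∈ s, Function.update x a μ i • v i = ∑ i ∈ s, x i • v i := by
              refine Finset.sum_congr rfl fun i hi => ?_
              rw [Function.update_of_ne (by rintro rfl; exact ha hi)]
            rw [hre, Function.update_self]
            have hexp : ∑ i ∈ s, x i • (v i - ((v i ⬝ᵥ w) / α) • v a)
                = ∑ i ∈ s, x i • v i - ((∑ i ∈ s, x i * (v i ⬝ᵥ w)) / α) • v a := by
              simp only [smul_sub]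
              rw [Finset.sum_sub_distrib]
              congr 1
              simp only [smul_smul]
              rw [← Finset.sum_smul, Finset.sum_div]
              congr 1
              exact Finset.sum_congr rfl fun i _ => (mul_div_assoc _ _ _).symm
            rw [hexp] at hsum
            have : ∑ i ∈ s, x i • v i
                = b - ((b ⬝ᵥ w) / α) • v a + ((∑ i ∈ s, x i * (v i ⬝ᵥ w)) / α) • v a := by
              rw [← hsum]; abel
            rw [this, hμdef, sub_div, sub_smul]
            abel
        · right
          refine ⟨u - ((v a ⬝ᵥ u) / α) • w, fun i hi => ?_, ?_⟩
          · rcases Finset.mem_insert.mp hi with rfl | hi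
            · have : v i ⬝ᵥ (u - ((v i ⬝ᵥ u) / α) • w) = 0 := by
                rw [dotProduct_sub, dotProduct_smul, smul_eq_mul]
                field_simp
                rw [hα]; ring
              rw [this]
            · have heq : v i ⬝ᵥ (u - ((v a ⬝ᵥ u) / α) • w)
                  = (v i - ((v i ⬝ᵥ w) / α) • v a) ⬝ᵥ u := by
                rw [dotProduct_sub, dotProduct_smul,
                  sub_dotProduct, smul_dotProduct, smul_eq_mul, smul_eq_mul]
                have : v a ⬝ᵥ u = u ⬝ᵥ v a := dotProduct_comm _ _
                rw [this]; ring
              rw [heq]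
              exact hu i hi
          · have heq : b ⬝ᵥ (u - ((v a ⬝ᵥ u) / α) • w)
                = (b - ((b ⬝ᵥ w) / α) • v a) ⬝ᵥ u := by
              rw [dotProduct_sub, dotProduct_smul,
                sub_dotProduct, smul_dotProduct, smul_eq_mul, smul_eq_mul]
              have : v a ⬝ᵥ u = u ⬝ᵥ v a := dotProduct_comm _ _
              rw [this]; ring
            rw [heq]
            exact hbu

/-- Columns of the combined Farkas system used to prove strong LP duality. -/
def lpCol {m n : ℕ} (A : Matrix (Fin m) (Fin n) ℝ) (b : Fin m → ℝ) (c : Fin n → ℝ) :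
    (Fin n ⊕ Fin m ⊕ Fin m ⊕ Fin n ⊕ Unit) → (Fin m ⊕ Fin n ⊕ Unit) → ℝ
  | .inl i, .inl j => A j i
  | .inl _, .inr (.inl _) => 0
  | .inl i, .inr (.inr _) => c i
  | .inr (.inl _), .inl _ => 0
  | .inr (.inl j), .inr (.inl i) => A j i
  | .inr (.inl j), .inr (.inr _) => -b j
  | .inr (.inr (.inl _)), .inl _ => 0
  | .inr (.inr (.inl j)), .inr (.inl i) => -A j i
  | .inr (.inr (.inl j)), .inr (.inr _) => b j
  | .inr (.inr (.inr (.inl _))), .inl _ => 0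
  | .inr (.inr (.inr (.inl k))), .inr (.inl r) => if r = k then 1 else 0
  | .inr (.inr (.inr (.inl _))), .inr (.inr _) => 0
  | .inr (.inr (.inr (.inr _))), .inl _ => 0
  | .inr (.inr (.inr (.inr _))), .inr (.inl _) => 0
  | .inr (.inr (.inr (.inr _))), .inr (.inr _) => 1

/-- Right-hand side of the combined Farkas system. -/
def lpRhs {m n : ℕ} (b : Fin m → ℝ) (c : Fin n → ℝ) : (Fin m ⊕ Fin n ⊕ Unit) → ℝ
  | .inl j => b j
  | .inr (.inl i) => c i
  | .inr (.inr _) => 0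

/-- Weak LP duality. -/
lemma lp_weak_duality {m n : ℕ} {A : Matrix (Fin m) (Fin n) ℝ} {b : Fin m → ℝ} {c : Fin n → ℝ}
    {x : Fin n → ℝ} {w : Fin m → ℝ} {y : Fin n → ℝ}
    (hAx : A *ᵥ x = b) (hx0 : 0 ≤ x) (hAw : Aᵀ *ᵥ w + y = c) (hy0 : 0 ≤ y) :
    b ⬝ᵥ w ≤ c ⬝ᵥ x := by
  have h1 : c ⬝ᵥ x = (Aᵀ *ᵥ w) ⬝ᵥ x + y ⬝ᵥ x := by rw [← hAw, add_dotProduct]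
  have h2 : (Aᵀ *ᵥ w) ⬝ᵥ x = w ⬝ᵥ (A *ᵥ x) := by
    rw [Matrix.mulVec_transpose, ← Matrix.dotProduct_mulVec]
  have h3 : 0 ≤ y ⬝ᵥ x := Finset.sum_nonneg fun i _ => mul_nonneg (hy0 i) (hx0 i)
  have h4 : b ⬝ᵥ w = w ⬝ᵥ (A *ᵥ x) := by rw [hAx, dotProduct_comm]
  linarith [h1, h2, h3, h4]

/-- Strong duality: if both the primal and the dual LP are feasible, then both have
optimal solutions and the optimal values coincide. -/
theorem strong_duality {m n : ℕ} (A : Matrix (Fin m) (Fin n) ℝ)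
    (b : Fin m → ℝ) (c : Fin n → ℝ)
    (hP : ∃ x, PrimalFeasible A b x) (hD : ∃ w y, DualFeasible A c w y) :
    ∃ x w y, PrimalFeasible A b x ∧ DualFeasible A c w y ∧
      (∀ x', PrimalFeasible A b x' → c ⬝ᵥ x ≤ c ⬝ᵥ x') ∧
      (∀ w' y', DualFeasible A c w' y' → b ⬝ᵥ w' ≤ b ⬝ᵥ w) ∧
      c ⬝ᵥ x = b ⬝ᵥ w := by
  classical
  obtain ⟨x0, hx0A, hx0p⟩ := hP
  obtain ⟨w0, y0, hw0A, hy0p⟩ := hD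
  rcases lp_farkas Finset.univ (lpCol A b c) (lpRhs b c) with ⟨z, hz, hsum⟩ | ⟨W, hW, hdW⟩
  · -- the combined system is solvable: extract optimal solutions
    set x : Fin n → ℝ := fun i => z (Sum.inl i) with hxdef
    set p : Fin m → ℝ := fun j => z (Sum.inr (Sum.inl j)) with hpdef
    set q : Fin m → ℝ := fun j => z (Sum.inr (Sum.inr (Sum.inl j))) with hqdef
    set y : Fin n → ℝ := fun i => z (Sum.inr (Sum.inr (Sum.inr (Sum.inl i)))) with hydef
    set t : ℝ := z (Sum.inr (Sum.inr (Sum.inr (Sum.inr ())))) with htdef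
    have hx0 : 0 ≤ x := fun i => hz _
    have hy0 : 0 ≤ y := fun i => hz _
    have ht0 : 0 ≤ t := hz _
    have hAx : A *ᵥ x = b := by
      funext j
      have h1 := congrFun hsum (Sum.inl j)
      simp [Fintype.sum_sum_type, lpCol, lpRhs] at h1
      simp only [mulVec, dotProduct]
      rw [← h1]
      exact Finset.sum_congr rfl fun i _ => mul_comm _ _
    have hAwy : Aᵀ *ᵥ (p - q) + y = c := by
      funext i
      have h2 := congrFun hsum (Sum.inr (Sum.inl i))
      simp [Fintype.sum_sum_type, lpCol, lpRhs] at h2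
      have e1 : (Aᵀ *ᵥ (p - q)) i = ∑ j, p j * A j i - ∑ j, q j * A j i := by
        simp only [mulVec, dotProduct, transpose_apply, Pi.sub_apply, mul_sub]
        rw [Finset.sum_sub_distrib]
        congr 1 <;> exact Finset.sum_congr rfl fun j _ => mul_comm _ _
      simp only [Pi.add_apply, e1]
      linarith [h2]
    have hobj : c ⬝ᵥ x - b ⬝ᵥ (p - q) + t = 0 := by
      have h3 := congrFun hsum (Sum.inr (Sum.inr ()))
      simp [Fintype.sum_sum_type, lpCol, lpRhs] at h3
      have e1 : c ⬝ᵥ x = ∑ i, x i * c i :=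
        Finset.sum_congr rfl fun i _ => mul_comm _ _
      have e2 : b ⬝ᵥ (p - q) = ∑ j, p j * b j - ∑ j, q j * b j := by
        simp only [dotProduct, Pi.sub_apply, mul_sub]
        rw [Finset.sum_sub_distrib]
        congr 1 <;> exact Finset.sum_congr rfl fun j _ => mul_comm _ _
      rw [e1, e2]
      linarith [h3]
    refine ⟨x, p - q, y, ⟨hAx, hx0⟩, ⟨hAwy, hy0⟩, ?_, ?_, ?_⟩
    · intro x' hx'
      have hwd := lp_weak_duality hx'.1 hx'.2 hAwy hy0
      linarith [hobj, ht0, hwd]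
    · intro w' y' hwy'
      have hwd := lp_weak_duality hAx hx0 hwy'.1 hwy'.2
      have hwd2 := lp_weak_duality hAx hx0 hAwy hy0
      linarith [hobj, ht0, hwd, hwd2]
    · have hwd2 := lp_weak_duality hAx hx0 hAwy hy0
      linarith [hobj, ht0, hwd2]
  · -- the alternative: derive a contradiction from feasibility
    exfalso
    set u1 : Fin m → ℝ := fun j => W (Sum.inl j) with hu1
    set u2 : Fin n → ℝ := fun i => W (Sum.inr (Sum.inl i)) with hu2
    set τ : ℝ := W (Sum.inr (Sum.inr ())) with hτdef
    have hc1 : ∀ i, (Aᵀ *ᵥ u1) i + τ * c i ≤ 0 := by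
      intro i
      have h := hW (Sum.inl i) (Finset.mem_univ _)
      simp [dotProduct, Fintype.sum_sum_type, lpCol, mulVec, mul_comm] at h ⊢
      convert h using 2
    have hc4 : ∀ k, u2 k ≤ 0 := by
      intro k
      have h := hW (Sum.inr (Sum.inr (Sum.inr (Sum.inl k)))) (Finset.mem_univ _)
      simpa [dotProduct, Fintype.sum_sum_type, lpCol] using h
    have hc5 : τ ≤ 0 := by
      have h := hW (Sum.inr (Sum.inr (Sum.inr (Sum.inr ())))) (Finset.mem_univ _)
      simpa [dotProduct, Fintype.sum_sum_type, lpCol] using h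
    have hc23 : A *ᵥ u2 = τ • b := by
      funext j
      have h2 := hW (Sum.inr (Sum.inl j)) (Finset.mem_univ _)
      have h3 := hW (Sum.inr (Sum.inr (Sum.inl j))) (Finset.mem_univ _)
      simp [dotProduct, Fintype.sum_sum_type, lpCol] at h2 h3
      simp only [mulVec, dotProduct, Pi.smul_apply, smul_eq_mul, hu2, hτdef]
      have : (W (Sum.inr (Sum.inr PUnit.unit)) : ℝ) = W (Sum.inr (Sum.inr ())) := rfl
      linarith [h2, h3]
    have hpos : 0 < b ⬝ᵥ u1 + c ⬝ᵥ u2 := by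
      have h := hdW
      simpa [dotProduct, Fintype.sum_sum_type, lpRhs] using h
    have key1 : b ⬝ᵥ u1 = (Aᵀ *ᵥ u1) ⬝ᵥ x0 := by
      rw [← hx0A, dotProduct_comm, Matrix.dotProduct_mulVec, ← Matrix.mulVec_transpose]
    have key2 : (Aᵀ *ᵥ u1) ⬝ᵥ u2 = τ * (b ⬝ᵥ u1) := by
      have e1 : (Aᵀ *ᵥ u1) ⬝ᵥ u2 = u1 ⬝ᵥ (A *ᵥ u2) := by
        rw [dotProduct_comm, Matrix.dotProduct_mulVec, Matrix.vecMul_transpose,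
          dotProduct_comm]
      rw [e1, hc23, dotProduct_smul, smul_eq_mul, dotProduct_comm]
    rcases lt_or_eq_of_le hc5 with hτneg | hτzero
    · -- τ < 0
      have e2 : -τ * (c ⬝ᵥ u2) ≤ (Aᵀ *ᵥ u1) ⬝ᵥ u2 := by
        simp only [dotProduct, Finset.mul_sum]
        refine Finset.sum_le_sum fun i _ => ?_
        have h1 : (Aᵀ *ᵥ u1) i ≤ -(τ * c i) := by linarith [hc1 i]
        have := mul_le_mul_of_nonpos_right h1 (hc4 i)
        calc -τ * (c i * u2 i) = -(τ * c i) * u2 i := by ring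
          _ ≤ (Aᵀ *ᵥ u1) i * u2 i := this
      nlinarith [key2, e2, hpos, hτneg]
    · -- τ = 0
      have hτ0 : τ = 0 := hτzero
      have k1 : (Aᵀ *ᵥ u1) ⬝ᵥ x0 ≤ 0 := by
        refine Finset.sum_nonpos fun i _ => mul_nonpos_of_nonpos_of_nonneg ?_ (hx0p i)
        have := hc1 i
        rw [hτ0] at this
        linarith
      have k2 : b ⬝ᵥ u1 ≤ 0 := by rw [key1]; exact k1
      have k3 : c ⬝ᵥ u2 ≤ 0 := by
        have e : c ⬝ᵥ u2 = (Aᵀ *ᵥ w0) ⬝ᵥ u2 + y0 ⬝ᵥ u2 := by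
          rw [← hw0A, add_dotProduct]
        have e2 : (Aᵀ *ᵥ w0) ⬝ᵥ u2 = w0 ⬝ᵥ (A *ᵥ u2) := by
          rw [Matrix.mulVec_transpose, ← Matrix.dotProduct_mulVec]
        have e3 : w0 ⬝ᵥ (A *ᵥ u2) = 0 := by
          rw [hc23, hτ0, zero_smul, dotProduct_zero]
        have e4 : y0 ⬝ᵥ u2 ≤ 0 :=
          Finset.sum_nonpos fun i _ => mul_nonpos_of_nonneg_of_nonpos (hy0p i) (hc4 i)
        rw [e, e2, e3] at *
        linarith
      linarith [hpos, k2, k3]
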